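/- arXiv:2509.21819 — 5 statements merged into one kernel-verified Lean document; each statement's English description precedes it below -/
import Mathlib

section
/- Let a, κ⁻¹, m be real parameters and μ ≠ 0 real. Define D₁(μ) = cos(μ) - aκ⁻¹·μ·sin(μ), D₀(μ) = 2aκ⁻¹·cos(μ) + (1 - (aκ⁻¹)²μ²)·sin(μ)/μ, and Δ(μ) = D₁(μ) - (m/3)·μ²·D₀(μ). If sin(μ) ≠ 0 and Δ(μ)² = 1, then D₀(μ)·((m/3)·D₁(μ) + sin(μ)/μ - m/3)·((m/3)·D₁(μ) + sin(μ)/μ + m/3) = 0. -/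
open Real

theorem band_endpoint_factorization (a κinv m μ : ℝ) (hμ : μ ≠ 0)
    (hs : Real.sin μ ≠ 0)
    (hΔ : ((Real.cos μ - a * κinv * μ * Real.sin μ) -
      (m/3) * μ^2 * (2 * a * κinv * Real.cos μ + (1 - (a * κinv)^2 * μ^2) * Real.sin μ / μ))^2 = 1) :
    (2 * a * κinv * Real.cos μ + (1 - (a * κinv)^2 * μ^2) * Real.sin μ / μ) *
      ((m/3) * (Real.cos μ - a * κinv * μ * Real.sin μ) + Real.sin μ / μ - m/3) *
      ((m/3) * (Real.cos μ - a * κinv * μ * Real.sin μ) + Real.sin μ / μ + m/3) = 0 := by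
  field_simp at hΔ ⊢
  refine mul_left_cancel₀ (pow_ne_zero 2 hμ) ?_
  linear_combination (-(μ^2) * Real.sin μ) * hΔ +
    (μ^2 * (9 * Real.sin μ + m^2 * μ^2 * (Real.cos μ * a * κinv * μ * 2
      + Real.sin μ * (1 - a^2 * κinv^2 * μ^2)))) * (Real.sin_sq_add_cos_sq μ)
end

section
/- Conversely to the band-endpoint factorization: let a, κ⁻¹, m ∈ ℝ, μ ≠ 0, and define D₁(μ) = cos(μ) - aκ⁻¹ μ sin(μ), D₀(μ) = 2aκ⁻¹ cos(μ) + (1 - (aκ⁻¹)²μ²) sin(μ)/μ, Δ(μ) = D₁(μ) - (m/3) μ² D₀(μ). If D₀(μ) = 0, then Δ(μ)² = 1. -/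
open Real

theorem D0_zero_implies_band_endpoint (a κinv m μ : ℝ) (hμ : μ ≠ 0)
    (hD0 : 2 * a * κinv * Real.cos μ + (1 - (a * κinv)^2 * μ^2) * Real.sin μ / μ = 0) :
    ((Real.cos μ - a * κinv * μ * Real.sin μ) -
      (m/3) * μ^2 * (2 * a * κinv * Real.cos μ + (1 - (a * κinv)^2 * μ^2) * Real.sin μ / μ))^2 = 1 := by
  rw [hD0]
  have h := hD0
  field_simp at h
  have hpyth := Real.sin_sq_add_cos_sq μ
  linear_combination (-Real.sin μ) * h + hpyth
end

section
/- Let μ ≠ 0 be real with sin(μ)/μ ≠ 0, and let a, κ⁻¹, m be real. Define D₁, D₀, Δ as before: D₁ = cos μ - aκ⁻¹μ sin μ, D₀ = 2aκ⁻¹cos μ + (1-(aκ⁻¹)²μ²) sin(μ)/μ, Δ = D₁ - (m/3)μ²D₀. Then Δ² = 1 if and only if D₀ = 0, or (m/3)(D₁ - 1) + sin(μ)/μ = 0, or (m/3)(D₁ + 1) + sin(μ)/μ = 0. -/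
open Real

theorem band_endpoint_characterization (a κinv m μ : ℝ) (hμ : μ ≠ 0)
    (hs : Real.sin μ / μ ≠ 0) :
    (((Real.cos μ - a * κinv * μ * Real.sin μ) -
        (m/3) * μ^2 * (2 * a * κinv * Real.cos μ + (1 - (a * κinv)^2 * μ^2) * Real.sin μ / μ))^2 = 1)
    ↔ (2 * a * κinv * Real.cos μ + (1 - (a * κinv)^2 * μ^2) * Real.sin μ / μ = 0 ∨
       (m/3) * ((Real.cos μ - a * κinv * μ * Real.sin μ) - 1) + Real.sin μ / μ = 0 ∨
       (m/3) * ((Real.cos μ - a * κinv * μ * Real.sin μ) + 1) + Real.sin μ / μ = 0) := by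
  set s := Real.sin μ / μ with hsdef
  have hsin : Real.sin μ = s * μ := by rw [hsdef, div_mul_cancel₀ _ hμ]
  set c := Real.cos μ with hcdef
  have hcos : c ^ 2 = 1 - (s * μ) ^ 2 := by
    have h := Real.sin_sq_add_cos_sq μ
    rw [hsin, ← hcdef] at h
    linarith
  have hdiv : (1 - (a * κinv)^2 * μ^2) * (s * μ) / μ
      = (1 - (a * κinv)^2 * μ^2) * s := by
    field_simp
  rw [hsin, hdiv]
  set D0 := 2 * a * κinv * c + (1 - (a * κinv)^2 * μ^2) * s with hD0
  set D1 := c - a * κinv * μ * (s * μ) with hD1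
  set P1 := m / 3 * (D1 - 1) + s with hP1
  set P2 := m / 3 * (D1 + 1) + s with hP2
  have key : s * ((D1 - m/3 * μ^2 * D0)^2 - 1) = -(μ^2 * D0 * (P1 * P2)) := by
    rw [hD0, hD1, hP1, hP2]
    linear_combination (s + (1/9) * m^2 * μ^2 * s + (2/9) * a * κinv * m^2 * μ^2 * c
      - (1/9) * a^2 * κinv^2 * m^2 * μ^4 * s) * hcos
  constructor
  · intro h
    have h0 : μ^2 * D0 * (P1 * P2) = 0 := by
      have : s * ((D1 - m/3 * μ^2 * D0)^2 - 1) = 0 := by rw [h]; ring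
      linear_combination key - this
    rcases mul_eq_zero.mp h0 with h1 | h1
    · rcases mul_eq_zero.mp h1 with h2 | h2
      · exact absurd h2 (pow_ne_zero 2 hμ)
      · exact Or.inl h2
    · rcases mul_eq_zero.mp h1 with h2 | h2
      · exact Or.inr (Or.inl h2)
      · exact Or.inr (Or.inr h2)
  · intro h
    have h0 : μ^2 * D0 * (P1 * P2) = 0 := by
      rcases h with h | h | h
      · rw [h]; ring
      · rw [h]; ring
      · rw [h]; ring
    have hz : s * ((D1 - m/3 * μ^2 * D0)^2 - 1) = 0 := by rw [key, h0]; ring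
    have := (mul_eq_zero.mp hz).resolve_left hs
    linarith [this]
end

section
/- Let a > 0, κ⁻¹ > 0. The set Σ₀ of positive reals λ such that (1 - (aκ⁻¹)²(λ/a))·sin(√(λ/a))/√(λ/a) + 2aκ⁻¹·cos(√(λ/a)) = 0 is infinite. -/
open Real

theorem Sigma0_infinite (a κinv : ℝ) (ha : 0 < a) (hκ : 0 < κinv) :
    {lam : ℝ | 0 < lam ∧
      (1 - (a * κinv)^2 * (lam/a)) * Real.sin (Real.sqrt (lam/a)) / Real.sqrt (lam/a) +
        2 * a * κinv * Real.cos (Real.sqrt (lam/a)) = 0}.Infinite := by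
  set g : ℝ → ℝ := fun μ => (1 - (a * κinv)^2 * μ^2) * Real.sin μ + 2 * a * κinv * μ * Real.cos μ with hg
  have hgc : Continuous g := by fun_prop
  -- in each interval [(2n+1)π, (2n+2)π] there is a zero of g
  have key : ∀ n : ℕ, ∃ μ : ℝ, μ ∈ Set.Icc ((2*n+1)*π) ((2*n+2)*π) ∧ g μ = 0 := by
    intro n
    have hxy : (2*(n:ℝ)+1)*π ≤ (2*n+2)*π := by
      have := Real.pi_pos
      nlinarith
    have hgx : g ((2*(n:ℝ)+1)*π) = -(2 * a * κinv * ((2*n+1)*π)) := by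
      have hsin : Real.sin ((2*(n:ℝ)+1)*π) = 0 := by
        have : ((2*(n:ℝ)+1)*π) = ((2*n+1 : ℕ) : ℝ) * π := by push_cast; ring
        rw [this, Real.sin_nat_mul_pi]
      have hcos : Real.cos ((2*(n:ℝ)+1)*π) = -1 := by
        have : ((2*(n:ℝ)+1)*π) = (n:ℝ) * (2*π) + π := by ring
        rw [this, Real.cos_nat_mul_two_pi_add_pi]
      simp [hg, hsin, hcos]
    have hgy : g ((2*(n:ℝ)+2)*π) = 2 * a * κinv * ((2*n+2)*π) := by
      have hsin : Real.sin ((2*(n:ℝ)+2)*π) = 0 := by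
        have : ((2*(n:ℝ)+2)*π) = ((2*n+2 : ℕ) : ℝ) * π := by push_cast; ring
        rw [this, Real.sin_nat_mul_pi]
      have hcos : Real.cos ((2*(n:ℝ)+2)*π) = 1 := by
        have : ((2*(n:ℝ)+2)*π) = ((n:ℝ)+1) * (2*π) := by ring
        rw [this]
        have := Real.cos_nat_mul_two_pi (n+1)
        push_cast at this ⊢
        convert this using 2
      simp [hg, hsin, hcos]
    have hmem : (0:ℝ) ∈ Set.Icc (g ((2*(n:ℝ)+1)*π)) (g ((2*(n:ℝ)+2)*π)) := by
      rw [hgx, hgy]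
      have h1 : (0:ℝ) < 2*a*κinv*((2*(n:ℝ)+1)*π) := by positivity
      have h2 : (0:ℝ) < 2*a*κinv*((2*(n:ℝ)+2)*π) := by positivity
      constructor <;> linarith
    have := intermediate_value_Icc hxy hgc.continuousOn hmem
    obtain ⟨μ, hμ1, hμ2⟩ := this
    exact ⟨μ, hμ1, hμ2⟩
  choose μ hμmem hμzero using key
  have hμpos : ∀ n, 0 < μ n := fun n => lt_of_lt_of_le
    (by have := Real.pi_pos; nlinarith [(Nat.cast_nonneg n : (0:ℝ) ≤ n)]) (hμmem n).1
  have hμmono : StrictMono μ := by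
    intro m n hmn
    calc μ m ≤ (2*m+2)*π := (hμmem m).2
      _ < (2*n+1)*π := by
          have := Real.pi_pos
          have : (m:ℝ) + 1 ≤ n := by exact_mod_cast hmn
          nlinarith [Real.pi_pos]
      _ ≤ μ n := (hμmem n).1
  apply Set.infinite_of_injective_forall_mem (f := fun n : ℕ => a * (μ n)^2)
  · intro m n hmn
    simp only at hmn
    have : (μ m)^2 = (μ n)^2 := by
      field_simp at hmn
      linarith [hmn]
    have := (pow_left_strictMonoOn₀ (n := 2) (by norm_num)).injOn.eq_iff
      (Set.mem_setOf.mpr (hμpos m).le) (Set.mem_setOf.mpr (hμpos n).le)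
    exact hμmono.injective (by
      nlinarith [hμpos m, hμpos n, sq_nonneg (μ m - μ n), sq_nonneg (μ m + μ n)])
  · intro n
    have hpos := hμpos n
    have hlam : a * (μ n)^2 / a = (μ n)^2 := by field_simp
    have hsqrt : Real.sqrt (a * (μ n)^2 / a) = μ n := by
      rw [hlam, Real.sqrt_sq hpos.le]
    refine ⟨by positivity, ?_⟩
    rw [hsqrt, hlam]
    have hz := hμzero n
    simp only [hg] at hz
    field_simp
    linarith [hz]
end

section
/- Borg-type gap existence: let a = 1, κ⁻¹ = 0, and m > 0. Then the free discriminant Δ(λ) = cos(√λ) - (m/3)·λ·sin(√λ)/√λ satisfies |Δ(λ)| > 1 for some λ > 0; i.e., the free hexagonal-lattice operator with concentrated mass m > 0 has a nonempty spectral gap in (0,∞). -/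
open Real

theorem borg_gap_exists (m : ℝ) (hm : 0 < m) :
    ∃ lam : ℝ, 0 < lam ∧
      |Real.cos (Real.sqrt lam) - (m/3) * lam * Real.sin (Real.sqrt lam) / Real.sqrt lam| > 1 := by
  set k : ℕ := ⌈3 / m⌉₊ + 1 with hk
  set μ : ℝ := π / 2 + (k : ℝ) * (2 * π) with hμ
  have hπ := Real.pi_pos
  have hkpos : (1 : ℝ) ≤ (k : ℝ) := by exact_mod_cast Nat.one_le_iff_ne_zero.mpr (by omega)
  have hμpos : 0 < μ := by positivity
  have hμbig : 3 / m < μ := by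
    have h1 : (3 / m : ℝ) ≤ (⌈3 / m⌉₊ : ℕ) := Nat.le_ceil _
    have h2 : ((⌈3 / m⌉₊ : ℕ) : ℝ) < (k : ℝ) := by exact_mod_cast Nat.lt_succ_self _
    have h3 : (k : ℝ) ≤ (k : ℝ) * (2 * π) := by
      nlinarith [Real.pi_gt_three]
    nlinarith
  refine ⟨μ ^ 2, by positivity, ?_⟩
  have hsqrt : Real.sqrt (μ ^ 2) = μ := Real.sqrt_sq hμpos.le
  rw [hsqrt]
  have hcos : Real.cos μ = 0 := by
    rw [hμ, Real.cos_add_nat_mul_two_pi, Real.cos_pi_div_two]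
  have hsin : Real.sin μ = 1 := by
    rw [hμ, Real.sin_add_nat_mul_two_pi, Real.sin_pi_div_two]
  rw [hcos, hsin]
  have : m / 3 * μ ^ 2 * 1 / μ = m / 3 * μ := by
    field_simp
  rw [this, abs_sub_comm, sub_zero, abs_of_pos (by positivity)]
  have : 3 / m < μ → 1 < m / 3 * μ := by
    intro h
    rw [div_lt_iff₀ hm] at h
    rw [div_mul_eq_mul_div, lt_div_iff₀ (by norm_num : (0:ℝ) < 3)]
    linarith
  exact this hμbig
end
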